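/- Let G = F ⋊_Φ ℤ and suppose the conjugacy class of c ∈ F (c ≠ 1) is φ-periodic, i.e. Φⁿ(c) = x c^{±1} x⁻¹ for some n ≥ 1 and x ∈ F. Then G contains a subgroup isomorphic to ℤ ⋊ ℤ (in particular containing ⟨c⟩ with infinite index over it), namely ⟨c, x⁻¹tⁿ⟩ ≅ ℤ ⋊ ℤ (which is ℤ² if the sign is +). -/

import Mathlib

open Subgroup Multiplicative

open scoped IsMulCommutative in
/-- torsion-freeness of free groups via Nielsen–Schreier + abelianization of zpowers -/
lemma freeGroup_zpow_eq_one {β : Type*} {c : FreeGroup β} (hc : c ≠ 1) {m : ℤ}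
    (h : c ^ m = 1) : m = 0 := by
  by_contra hm
  set H := Subgroup.zpowers c with hH
  let S := IsFreeGroup.Generators H
  let χ : H →* Multiplicative (S →₀ ℤ) :=
    IsFreeGroup.lift fun s => Multiplicative.ofAdd (Finsupp.single s 1)
  let ρ' : (S →₀ ℤ) →+ Additive H :=
    Finsupp.liftAddHom fun s => zmultiplesHom (Additive H) (Additive.ofMul (IsFreeGroup.of s))
  let ρ : Multiplicative (S →₀ ℤ) →* H := ρ'.toMultiplicativeLeft
  have hinv : ρ.comp χ = MonoidHom.id H := by
    apply IsFreeGroup.ext_hom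
    intro s
    simp [χ, ρ, ρ', AddMonoidHom.coe_toMultiplicativeLeft]
  set h0 : H := ⟨c, Subgroup.mem_zpowers c⟩ with hh0
  have h1 : χ h0 ^ m = 1 := by
    rw [← map_zpow]
    have : h0 ^ m = 1 := by
      ext
      push_cast
      exact h
    rw [this, map_one]
  have h2 : χ h0 = 1 := by
    have := congrArg Multiplicative.toAdd h1
    rw [toAdd_zpow, toAdd_one] at this
    have h3 : Multiplicative.toAdd (χ h0) = 0 := by
      ext s
      have := congrFun (congrArg DFunLike.coe this) s
      rw [Finsupp.smul_apply, Finsupp.coe_zero, Pi.zero_apply, smul_eq_mul, mul_eq_zero] at this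
      exact this.resolve_left hm
    have := congrArg Multiplicative.ofAdd h3
    simpa using this
  have : h0 = 1 := by
    have := congrArg (fun z => ρ (χ z)) (rfl : h0 = h0)
    have h4 : ρ (χ h0) = h0 := congrFun (congrArg DFunLike.coe hinv) h0
    rw [h2, map_one] at h4
    exact h4.symm
  exact hc (by simpa [hh0, Subtype.ext_iff] using this)

/-- the units of ℤ act on `Multiplicative ℤ` -/
def unitAut : ℤˣ →* MulAut (Multiplicative ℤ) where
  toFun ε :=
    { toFun := fun a => a ^ (ε : ℤ)
      invFun := fun a => a ^ (ε : ℤ)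
      left_inv := fun a => by
        show (a ^ (ε : ℤ)) ^ (ε : ℤ) = a
        rw [← zpow_mul, ← Units.val_mul, Int.units_mul_self, Units.val_one, zpow_one]
      right_inv := fun a => by
        show (a ^ (ε : ℤ)) ^ (ε : ℤ) = a
        rw [← zpow_mul, ← Units.val_mul, Int.units_mul_self, Units.val_one, zpow_one]
      map_mul' := fun a b => mul_zpow a b _ }
  map_one' := by ext a; simp
  map_mul' ε₁ ε₂ := by
    ext a
    show a ^ ((ε₁ * ε₂ : ℤˣ) : ℤ) = (a ^ (ε₂ : ℤ)) ^ (ε₁ : ℤ)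
    rw [← zpow_mul, Units.val_mul, mul_comm]

lemma key {G : Type*} [Group G] (C S : G) (ε : ℤˣ)
    (hconj : S * C * S⁻¹ = C ^ (ε : ℤ))
    (hC : ∀ m : ℤ, C ^ m = 1 → m = 0)
    (hCS : ∀ a b : ℤ, C ^ a * S ^ b = 1 → b = 0) :
    ∃ ψ : Multiplicative ℤ →* MulAut (Multiplicative ℤ),
      Nonempty ((Subgroup.closure {C, S} : Subgroup G) ≃*
        Multiplicative ℤ ⋊[ψ] Multiplicative ℤ) := by
  have hεinv : (ε⁻¹ : ℤˣ) = ε := by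
    rw [inv_eq_iff_mul_eq_one, Int.units_mul_self]
  have hconjS : MulAut.conj S C = C ^ (ε : ℤ) := by simpa [MulAut.conj] using hconj
  have hveps : (ε : ℤ) * (ε : ℤ) = 1 := by
    rw [← Units.val_mul, Int.units_mul_self, Units.val_one]
  have hconjSinv : MulAut.conj S⁻¹ C = C ^ (ε : ℤ) := by
    have h1 : MulAut.conj S⁻¹ (C ^ (ε : ℤ)) = C := by
      rw [MulAut.conj_apply, inv_inv, ← hconj]; group
    have h2 : (MulAut.conj S⁻¹ C) ^ (ε : ℤ) = C := by rw [← map_zpow]; exact h1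
    calc MulAut.conj S⁻¹ C = ((MulAut.conj S⁻¹ C) ^ (ε : ℤ)) ^ (ε : ℤ) := by
          rw [← zpow_mul, hveps, zpow_one]
      _ = C ^ (ε : ℤ) := by rw [h2]
  have hkey : ∀ b : ℤ, MulAut.conj (S ^ b) C = C ^ ((ε ^ b : ℤˣ) : ℤ) := by
    intro b
    induction b using Int.induction_on with
    | zero => simp
    | succ k ih =>
        have : S ^ ((k : ℤ) + 1) = S * S ^ (k : ℤ) := by
          rw [add_comm, zpow_add, zpow_one]
        rw [this, map_mul, MulAut.mul_apply, ih, map_zpow, hconjS, ← zpow_mul,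
          zpow_add, zpow_one]
        congr 1
        push_cast [mul_comm]
        ring
    | pred k ih =>
        have : S ^ ((-k : ℤ) - 1) = S⁻¹ * S ^ (-k : ℤ) := by
          rw [show ((-k : ℤ) - 1) = -1 + -k by ring, zpow_add, zpow_neg_one]
        rw [this, map_mul, MulAut.mul_apply, ih, map_zpow, hconjSinv, ← zpow_mul]
        congr 1
        rw [sub_eq_add_neg, zpow_add, zpow_neg_one, hεinv]
        push_cast [mul_comm]
        ring
  have hkey' : ∀ b a : ℤ, S ^ b * C ^ a * (S ^ b)⁻¹ = C ^ (((ε ^ b : ℤˣ) : ℤ) * a) := by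
    intro b a
    have := congrArg (fun z => z ^ a) (hkey b)
    simp only [← map_zpow, ← zpow_mul] at this
    simpa [MulAut.conj] using this
  -- the semidirect structure map
  refine ⟨unitAut.comp (zpowersHom ℤˣ ε), ?_⟩
  set ψ := unitAut.comp (zpowersHom ℤˣ ε) with hψ
  have hψapp : ∀ (b a : Multiplicative ℤ),
      (ψ b a) = ofAdd (((ε ^ (toAdd b) : ℤˣ) : ℤ) * toAdd a) := by
    intro b a
    show a ^ ((((zpowersHom ℤˣ ε) b) : ℤˣ) : ℤ) = _
    rw [zpowersHom_apply]
    rw [← ofAdd_toAdd a, ← ofAdd_zsmul, smul_eq_mul, toAdd_ofAdd]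
    try exact congrArg ofAdd (mul_comm _ _)
  let f : Multiplicative ℤ ⋊[ψ] Multiplicative ℤ →* G :=
    { toFun := fun p => C ^ (Multiplicative.toAdd p.left) * S ^ (Multiplicative.toAdd p.right)
      map_one' := by simp
      map_mul' := fun p q => by
        simp only [SemidirectProduct.mul_left, SemidirectProduct.mul_right, toAdd_mul]
        rw [hψapp, toAdd_ofAdd]
        calc C ^ (toAdd p.left + ((ε ^ (toAdd p.right) : ℤˣ) : ℤ) * toAdd q.left) *
              S ^ (toAdd p.right + toAdd q.right)
            = C ^ (toAdd p.left) * (C ^ (((ε ^ (toAdd p.right) : ℤˣ) : ℤ) * toAdd q.left) *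
              (S ^ (toAdd p.right) * S ^ (toAdd q.right))) := by
              rw [zpow_add, zpow_add]; group
          _ = C ^ (toAdd p.left) * ((S ^ (toAdd p.right) * C ^ (toAdd q.left) *
                (S ^ (toAdd p.right))⁻¹) * (S ^ (toAdd p.right) * S ^ (toAdd q.right))) := by
              rw [hkey']
          _ = C ^ toAdd p.left * S ^ toAdd p.right * (C ^ toAdd q.left * S ^ toAdd q.right) := by
              group }
  have hfinj : Function.Injective f := by
    rw [← MonoidHom.ker_eq_bot_iff, eq_bot_iff]
    intro p hp
    have hp1 : C ^ (toAdd p.left) * S ^ (toAdd p.right) = 1 := hp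
    have hb : toAdd p.right = 0 := hCS _ _ hp1
    have ha : toAdd p.left = 0 := by
      apply hC
      rw [hb, zpow_zero, mul_one] at hp1
      exact hp1
    have : p = 1 := by
      ext
      · simpa using ha
      · simpa using hb
    simp [this, Subgroup.mem_bot]
  have hrange : f.range = Subgroup.closure {C, S} := by
    apply le_antisymm
    · rintro _ ⟨p, rfl⟩
      have hCmem : C ∈ Subgroup.closure {C, S} :=
        Subgroup.subset_closure (Set.mem_insert _ _)
      have hSmem : S ∈ Subgroup.closure {C, S} :=
        Subgroup.subset_closure (Set.mem_insert_of_mem _ rfl)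
      exact mul_mem (zpow_mem hCmem _) (zpow_mem hSmem _)
    · rw [Subgroup.closure_le]
      rintro z (rfl | rfl)
      · exact ⟨⟨ofAdd 1, 1⟩, by simp [f]⟩
      · exact ⟨⟨1, ofAdd 1⟩, by simp [f]⟩
  exact ⟨((MonoidHom.ofInjective hfinj).trans (MulEquiv.subgroupCongr hrange)).symm⟩

theorem stmt17 {α : Type*} [Finite α]
    (Φ : Multiplicative ℤ →* MulAut (FreeGroup α))
    (c x : FreeGroup α) (hc : c ≠ 1) (n : ℕ) (hn : 1 ≤ n)
    (hper : Φ (Multiplicative.ofAdd (n : ℤ)) c = x * c * x⁻¹ ∨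
            Φ (Multiplicative.ofAdd (n : ℤ)) c = x * c⁻¹ * x⁻¹) :
    (SemidirectProduct.inl (φ := Φ) c ∈
        Subgroup.closure {SemidirectProduct.inl (φ := Φ) c,
          (SemidirectProduct.inl (φ := Φ) x)⁻¹ *
            SemidirectProduct.inr (φ := Φ) (Multiplicative.ofAdd (n : ℤ))}) ∧
    ∃ ψ : Multiplicative ℤ →* MulAut (Multiplicative ℤ),
      Nonempty ((Subgroup.closure {SemidirectProduct.inl (φ := Φ) c,
          (SemidirectProduct.inl (φ := Φ) x)⁻¹ *
            SemidirectProduct.inr (φ := Φ) (Multiplicative.ofAdd (n : ℤ))} :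
            Subgroup (FreeGroup α ⋊[Φ] Multiplicative ℤ)) ≃*
        Multiplicative ℤ ⋊[ψ] Multiplicative ℤ) := by
  set C : FreeGroup α ⋊[Φ] Multiplicative ℤ := SemidirectProduct.inl (φ := Φ) c with hCdef
  set S : FreeGroup α ⋊[Φ] Multiplicative ℤ :=
    (SemidirectProduct.inl (φ := Φ) x)⁻¹ *
      SemidirectProduct.inr (φ := Φ) (Multiplicative.ofAdd (n : ℤ)) with hSdef
  constructor
  · exact Subgroup.subset_closure (Set.mem_insert _ _)
  -- conjugation relation
  have hmid : SemidirectProduct.inr (φ := Φ) (Multiplicative.ofAdd (n : ℤ)) * C *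
      (SemidirectProduct.inr (φ := Φ) (Multiplicative.ofAdd (n : ℤ)))⁻¹ =
      SemidirectProduct.inl (φ := Φ) (Φ (Multiplicative.ofAdd (n : ℤ)) c) := by
    rw [SemidirectProduct.inl_aut, map_inv]
  have hconj : ∀ d : FreeGroup α,
      Φ (Multiplicative.ofAdd (n : ℤ)) c = x * d * x⁻¹ →
      S * C * S⁻¹ = SemidirectProduct.inl (φ := Φ) d := by
    intro d hd
    have hstep : S * C * S⁻¹ = (SemidirectProduct.inl (φ := Φ) x)⁻¹ *
        (SemidirectProduct.inr (φ := Φ) (Multiplicative.ofAdd (n : ℤ)) * C *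
        (SemidirectProduct.inr (φ := Φ) (Multiplicative.ofAdd (n : ℤ)))⁻¹) *
        SemidirectProduct.inl (φ := Φ) x := by
      rw [hSdef]; group
    rw [hstep, hmid, hd, ← map_inv, ← map_mul, ← map_mul]
    congr 1
    group
  have hC1 : ∀ m : ℤ, C ^ m = 1 → m = 0 := by
    intro m hm
    rw [hCdef, ← map_zpow] at hm
    have : c ^ m = 1 := by
      have := SemidirectProduct.inl_injective (φ := Φ) (hm.trans (map_one _).symm)
      exact this
    exact freeGroup_zpow_eq_one hc this
  have hCS : ∀ a b : ℤ, C ^ a * S ^ b = 1 → b = 0 := by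
    intro a b hab
    have := congrArg (SemidirectProduct.rightHom (φ := Φ)) hab
    rw [map_mul, map_zpow, map_zpow, map_one] at this
    rw [hCdef, hSdef, SemidirectProduct.rightHom_inl, map_mul, map_inv,
      SemidirectProduct.rightHom_inl, SemidirectProduct.rightHom_inr] at this
    simp only [one_zpow, inv_one, one_mul] at this
    have h2 := congrArg Multiplicative.toAdd this
    rw [toAdd_zpow, toAdd_ofAdd, toAdd_one, smul_eq_mul, mul_eq_zero] at h2
    rcases h2 with h2 | h2
    · exact h2
    · exact absurd h2 (by positivity)
  rcases hper with hp | hp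
  · have hs : S * C * S⁻¹ = C ^ ((1 : ℤˣ) : ℤ) := by
      rw [hconj c hp]; simp [hCdef]
    exact (key C S 1 hs hC1 hCS)
  · have hs : S * C * S⁻¹ = C ^ ((-1 : ℤˣ) : ℤ) := by
      rw [hconj c⁻¹ hp]; simp [hCdef]
    exact (key C S (-1) hs hC1 hCS)
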